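/- arXiv:1507.00789 — 5 statements merged into one kernel-verified Lean document; each statement's English description precedes it below -/
import Mathlib

section
/- Let R be an N_e × N_e complex Hermitian positive semidefinite matrix with largest eigenvalue λ_max and unit-norm eigenvector u_e for λ_max, let τ, N_e be positive integers, let ω ∈ ℂ^τ satisfy ‖ω‖² = τ, and let W be the N_e × τ matrix each of whose rows equals ω^T. Then for every N_e × N_e complex matrix P with tr(P W W^H P^H) ≤ N_e τ, one has Σ_{r=1}^{N_e} Σ_{s=1}^{N_e} (P^H R P)_{rs} ≤ N_e · λ_max. Moreover, any matrix P whose columns sum to √N_e · u_e (for instance the matrix all of whose columns equal (1/√N_e) u_e) satisfies the constraint with equality and attains the value N_e · λ_max. -/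
open Matrix
open scoped ComplexOrder

private theorem sum_quad' {Ne : ℕ} (R P : Matrix (Fin Ne) (Fin Ne) ℂ) :
    (∑ r, ∑ s, (Pᴴ * R * P) r s) = star (fun i => ∑ r, P i r) ⬝ᵥ (R *ᵥ fun i => ∑ r, P i r) := by
  simp only [mul_apply, conjTranspose_apply, dotProduct, mulVec, Pi.star_apply, star_sum,
    Finset.sum_mul, Finset.mul_sum]
  conv_lhs => enter [2, r]; enter [2, s]; rw [Finset.sum_comm]
  conv_lhs => enter [2, r]; rw [Finset.sum_comm]
  conv_lhs => rw [Finset.sum_comm]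
  conv_rhs => enter [2, i]; rw [Finset.sum_comm]
  conv_rhs => enter [2, i]; enter [2, r]; rw [Finset.sum_comm]
  refine Finset.sum_congr rfl fun i _ => Finset.sum_comm.trans ?_
  simp [mul_assoc]

private theorem trace_quad' {Ne τ : ℕ} (P : Matrix (Fin Ne) (Fin Ne) ℂ)
    (ω : Fin τ → ℂ) (hω : (∑ t, Complex.normSq (ω t)) = (τ : ℝ))
    (W : Matrix (Fin Ne) (Fin τ) ℂ) (hW : ∀ r, W r = ω) :
    Matrix.trace (P * W * Wᴴ * Pᴴ)
      = (τ : ℂ) * (star (fun i => ∑ r, P i r) ⬝ᵥ (fun i => ∑ r, P i r)) := by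
  have key : ∀ i t, (P * W) i t = (∑ j, P i j) * ω t := by
    intro i t
    simp [mul_apply, hW, Finset.sum_mul]
  have h1 : P * W * Wᴴ * Pᴴ = (P * W) * (P * W)ᴴ := by
    rw [conjTranspose_mul]; exact Matrix.mul_assoc _ _ _
  rw [h1]
  simp only [trace, diag_apply, mul_apply (M := P * W), conjTranspose_apply, key, dotProduct, Pi.star_apply]
  have h2 : ∀ i t, (∑ j, P i j) * ω t * star ((∑ j, P i j) * ω t)
      = (star (∑ j, P i j) * (∑ j, P i j)) * ((Complex.normSq (ω t) : ℝ) : ℂ) := by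
    intro i t
    rw [star_mul']
    rw [show ((Complex.normSq (ω t) : ℝ) : ℂ) = ω t * star (ω t) from (Complex.mul_conj _).symm]
    ring
  simp only [h2, ← Finset.sum_mul, ← Finset.mul_sum, ← Complex.ofReal_sum, hω]
  push_cast
  ring

private theorem quad_le' {Ne : ℕ} {R : Matrix (Fin Ne) (Fin Ne) ℂ} (hR : R.PosSemidef)
    {lmax : ℝ} (hmax : ∀ i, hR.1.eigenvalues i ≤ lmax) (x : Fin Ne → ℂ) :
    (star x ⬝ᵥ R *ᵥ x).re ≤ lmax * (star x ⬝ᵥ x).re := by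
  classical
  set U := (hR.1.eigenvectorUnitary : Matrix (Fin Ne) (Fin Ne) ℂ) with hU
  have hM : ((lmax : ℂ) • (1 : Matrix (Fin Ne) (Fin Ne) ℂ) - R).PosSemidef := by
    have hdiag : PosSemidef (diagonal (fun i => ((lmax - hR.1.eigenvalues i : ℝ) : ℂ))) :=
      posSemidef_diagonal_iff.mpr fun i =>
        Complex.zero_le_real.mpr (by linarith [hmax i])
    have h := hdiag.mul_mul_conjTranspose_same U
    have hUU : U * Uᴴ = 1 := mem_unitaryGroup_iff.mp hR.1.eigenvectorUnitary.2
    have hd : (diagonal (fun i => ((lmax - hR.1.eigenvalues i : ℝ) : ℂ)))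
        = (lmax : ℂ) • (1 : Matrix (Fin Ne) (Fin Ne) ℂ)
          - diagonal (RCLike.ofReal ∘ hR.1.eigenvalues) := by
      rw [smul_one_eq_diagonal, diagonal_sub]
      congr 1
      funext i
      simp [Function.comp, Complex.ofReal_sub]
    have hcalc : U * (diagonal (fun i => ((lmax - hR.1.eigenvalues i : ℝ) : ℂ))) * Uᴴ
        = (lmax : ℂ) • (1 : Matrix (Fin Ne) (Fin Ne) ℂ) - R := by
      rw [hd, Matrix.mul_sub, Matrix.sub_mul]
      congr 1
      · rw [Matrix.mul_smul, Matrix.smul_mul, Matrix.mul_one, hUU]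
      · exact (hR.1.spectral_theorem).symm
    rwa [hcalc] at h
  have h0 := hM.dotProduct_mulVec_nonneg x
  have hmv : ((lmax : ℂ) • (1 : Matrix (Fin Ne) (Fin Ne) ℂ) - R) *ᵥ x
      = (lmax : ℂ) • x - R *ᵥ x := by
    rw [Matrix.sub_mulVec, Matrix.smul_mulVec, Matrix.one_mulVec]
  rw [hmv, dotProduct_sub, dotProduct_smul] at h0
  have h1 := (Complex.le_def.mp h0).1
  simp only [Complex.zero_re, Complex.sub_re, smul_eq_mul, Complex.mul_re,
    Complex.ofReal_re, Complex.ofReal_im, zero_mul, sub_zero] at h1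
  linarith

/-- Theorem 1 of the paper: any pilot-contamination precoder `P` satisfying the power
constraint `tr(P W Wᴴ Pᴴ) ≤ N_e τ` yields `∑_{r,s} (Pᴴ R P)_{rs} ≤ N_e λ_max`, and any
`P` whose columns sum to `√N_e u_e` satisfies the constraint with equality and attains
the value `N_e λ_max`. -/
theorem stmt_2 {Ne τ : ℕ} (hNe : 0 < Ne) (hτ : 0 < τ)
    (R : Matrix (Fin Ne) (Fin Ne) ℂ) (hR : R.PosSemidef)
    (lmax : ℝ)
    (hmem : ∃ i, hR.1.eigenvalues i = lmax)
    (hmax : ∀ i, hR.1.eigenvalues i ≤ lmax)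
    (u : Fin Ne → ℂ) (hu : star u ⬝ᵥ u = 1)
    (heig : R *ᵥ u = (lmax : ℂ) • u)
    (ω : Fin τ → ℂ) (hω : (∑ t, Complex.normSq (ω t)) = (τ : ℝ))
    (W : Matrix (Fin Ne) (Fin τ) ℂ) (hW : ∀ r, W r = ω) :
    (∀ P : Matrix (Fin Ne) (Fin Ne) ℂ,
       (Matrix.trace (P * W * Wᴴ * Pᴴ)).re ≤ (Ne : ℝ) * τ →
       (∑ r, ∑ s, (Pᴴ * R * P) r s).re ≤ (Ne : ℝ) * lmax) ∧
    (∀ P : Matrix (Fin Ne) (Fin Ne) ℂ,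
       (fun r => ∑ s, P r s) = ((Real.sqrt Ne : ℝ) : ℂ) • u →
       Matrix.trace (P * W * Wᴴ * Pᴴ) = (((Ne : ℝ) * τ : ℝ) : ℂ) ∧
       (∑ r, ∑ s, (Pᴴ * R * P) r s) = (((Ne : ℝ) * lmax : ℝ) : ℂ)) := by
  have hl0 : 0 ≤ lmax := by
    obtain ⟨i, hi⟩ := hmem
    exact hi ▸ hR.eigenvalues_nonneg i
  constructor
  · intro P hP
    set x : Fin Ne → ℂ := fun i => ∑ r, P i r with hx
    rw [trace_quad' P ω hω W hW] at hP
    have hs : ((τ : ℂ) * (star x ⬝ᵥ x)).re = (τ : ℝ) * (star x ⬝ᵥ x).re := by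
      simp [Complex.mul_re]
    rw [hs] at hP
    have hsle : (star x ⬝ᵥ x).re ≤ (Ne : ℝ) := by
      have hτpos : (0 : ℝ) < τ := by exact_mod_cast hτ
      nlinarith
    rw [sum_quad' R P]
    calc (star x ⬝ᵥ R *ᵥ x).re ≤ lmax * (star x ⬝ᵥ x).re := quad_le' hR hmax x
      _ ≤ lmax * (Ne : ℝ) := by nlinarith
      _ = (Ne : ℝ) * lmax := by ring
  · intro P hP
    set c : ℂ := ((Real.sqrt Ne : ℝ) : ℂ) with hc
    have hc2 : c * c = ((Ne : ℝ) : ℂ) := by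
      rw [hc, ← Complex.ofReal_mul, Real.mul_self_sqrt (Nat.cast_nonneg Ne)]
    have hstarc : star c = c := by rw [hc]; exact Complex.conj_ofReal _
    have hsx : star (c • u) ⬝ᵥ (c • u) = ((Ne : ℝ) : ℂ) := by
      rw [star_smul, smul_dotProduct, dotProduct_smul, hu, hstarc, smul_eq_mul,
        smul_eq_mul, mul_one, hc2]
    constructor
    · rw [trace_quad' P ω hω W hW, hP, hsx]
      push_cast
      ring
    · rw [sum_quad' R P, hP]
      rw [star_smul, smul_dotProduct, mulVec_smul, heig]
      rw [dotProduct_smul, dotProduct_smul, hu, hstarc]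
      simp only [smul_eq_mul, mul_one]
      rw [← mul_assoc, hc2]
      push_cast
      ring
end

section
/- Let θ_m ≥ 0, θ_bp > 0 and θ̃_e > 0 be real numbers such that D := θ_bp² θ̃_e² + (θ_bp + θ_m)(θ_m − θ̃_e) θ_bp θ̃_e ≥ 0, and set γ_th = (−θ_bp θ̃_e + √D) / ((θ_bp + θ_m) θ_bp θ̃_e). Then the function f(γ) = (γθ_bp + γθ_m + 1) / ((γθ_bp + 1)(γθ̃_e + 1)) is strictly decreasing on the interval (max(γ_th, 0), ∞). -/
/-- Theorem 3 of the paper: without artificial noise, the ratio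
`f(γ) = (γθ_bp + γθ_m + 1)/((γθ_bp + 1)(γθ̃_e + 1))` is strictly decreasing for
`γ > max(γ_th, 0)`. -/
theorem stmt_4 (θm θbp θe : ℝ) (hθm : 0 ≤ θm) (hθbp : 0 < θbp) (hθe : 0 < θe)
    (hD : 0 ≤ θbp ^ 2 * θe ^ 2 + (θbp + θm) * (θm - θe) * θbp * θe) :
    StrictAntiOn
      (fun γ : ℝ => (γ * θbp + γ * θm + 1) / ((γ * θbp + 1) * (γ * θe + 1)))
      (Set.Ioi
        (max ((-(θbp * θe) +
            Real.sqrt (θbp ^ 2 * θe ^ 2 + (θbp + θm) * (θm - θe) * θbp * θe))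
          / ((θbp + θm) * θbp * θe)) 0)) := by
  intro x hx y hy hxy
  simp only [Set.mem_Ioi] at hx hy
  set D : ℝ := θbp ^ 2 * θe ^ 2 + (θbp + θm) * (θm - θe) * θbp * θe with hDdef
  set s : ℝ := Real.sqrt D with hsdef
  have hs2 : s ^ 2 = D := Real.sq_sqrt hD
  have hs0 : 0 ≤ s := Real.sqrt_nonneg _
  have habc : 0 < (θbp + θm) * θbp * θe := by positivity
  have hx0 : 0 < x := lt_of_le_of_lt (le_max_right _ _) hx
  have hy0 : 0 < y := lt_of_le_of_lt (le_max_right _ _) hy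
  have hxg : (-(θbp * θe) + s) / ((θbp + θm) * θbp * θe) < x :=
    lt_of_le_of_lt (le_max_left _ _) hx
  have hyg : (-(θbp * θe) + s) / ((θbp + θm) * θbp * θe) < y :=
    lt_of_le_of_lt (le_max_left _ _) hy
  have hx1 : -(θbp * θe) + s < x * ((θbp + θm) * θbp * θe) :=
    (div_lt_iff₀ habc).mp hxg
  have hy1 : -(θbp * θe) + s < y * ((θbp + θm) * θbp * θe) :=
    (div_lt_iff₀ habc).mp hyg
  have hdx : 0 < (x * θbp + 1) * (x * θe + 1) := by positivity
  have hdy : 0 < (y * θbp + 1) * (y * θe + 1) := by positivity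
  show (y * θbp + y * θm + 1) / ((y * θbp + 1) * (y * θe + 1)) <
    (x * θbp + x * θm + 1) / ((x * θbp + 1) * (x * θe + 1))
  rw [div_lt_div_iff₀ hdy hdx]
  have key : 0 < (y - x) *
      ((x * ((θbp + θm) * θbp * θe) + θbp * θe) *
        (y * ((θbp + θm) * θbp * θe) + θbp * θe) - D) := by
    apply mul_pos (by linarith)
    nlinarith [mul_pos (by linarith : (0:ℝ) < x * ((θbp + θm) * θbp * θe) + θbp * θe - s)
        (by linarith : (0:ℝ) < y * ((θbp + θm) * θbp * θe) + θbp * θe - s),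
      mul_nonneg hs0 (by linarith : (0:ℝ) ≤ x * ((θbp + θm) * θbp * θe) + θbp * θe - s),
      mul_nonneg hs0 (by linarith : (0:ℝ) ≤ y * ((θbp + θm) * θbp * θe) + θbp * θe - s)]
  nlinarith [key, habc, mul_pos habc (mul_pos hdx hdy)]
end

section
/- Let N0 > 0 be a real number, and let A, B be n × n complex Hermitian positive semidefinite matrices with A·B = 0. Then the matrices N0·I + A and N0·I + A + B are invertible, and for every n × n complex matrix R with R·B = 0 one has R (N0·I + A + B)^{-1} = R (N0·I + A)^{-1}. -/
open Matrix
open scoped ComplexOrder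

/-- Key matrix-algebra step (Eq. (82)) of Theorem 3 of the paper: if `A B = 0` for
Hermitian PSD `A`, `B` and `N0 > 0`, then `N0 I + A` and `N0 I + A + B` are invertible
and `R (N0 I + A + B)⁻¹ = R (N0 I + A)⁻¹` for every `R` with `R B = 0`. -/
theorem stmt_13 {n : ℕ} (N0 : ℝ) (hN0 : 0 < N0)
    (A B : Matrix (Fin n) (Fin n) ℂ) (hA : A.PosSemidef) (hB : B.PosSemidef)
    (hAB : A * B = 0) :
    IsUnit ((N0 : ℂ) • (1 : Matrix (Fin n) (Fin n) ℂ) + A) ∧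
    IsUnit ((N0 : ℂ) • (1 : Matrix (Fin n) (Fin n) ℂ) + A + B) ∧
    ∀ R : Matrix (Fin n) (Fin n) ℂ, R * B = 0 →
      R * ((N0 : ℂ) • (1 : Matrix (Fin n) (Fin n) ℂ) + A + B)⁻¹
        = R * ((N0 : ℂ) • (1 : Matrix (Fin n) (Fin n) ℂ) + A)⁻¹ := by
  have hI : ((N0 : ℂ) • (1 : Matrix (Fin n) (Fin n) ℂ)).PosDef := by
    refine posDef_iff_dotProduct_mulVec.mpr ⟨?_, fun x hx => ?_⟩
    · rw [Matrix.IsHermitian, conjTranspose_smul, conjTranspose_one, Complex.star_def,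
        Complex.conj_ofReal]
    · rw [smul_mulVec, one_mulVec, dotProduct_smul]
      have hx' : 0 < star x ⬝ᵥ x := dotProduct_star_self_pos_iff.mpr hx
      have : (0:ℂ) < (N0:ℂ) := by exact_mod_cast hN0
      exact mul_pos this hx'
  have h1 : ((N0 : ℂ) • (1 : Matrix (Fin n) (Fin n) ℂ) + A).PosDef := hI.add_posSemidef hA
  have h2 : ((N0 : ℂ) • (1 : Matrix (Fin n) (Fin n) ℂ) + A + B).PosDef :=
    (hI.add_posSemidef hA).add_posSemidef hB
  refine ⟨h1.isUnit, h2.isUnit, fun R hRB => ?_⟩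
  set M := (N0 : ℂ) • (1 : Matrix (Fin n) (Fin n) ℂ) + A with hM
  have hMB : M⁻¹ * B = (N0 : ℂ)⁻¹ • B := by
    have hN0' : (N0:ℂ) ≠ 0 := by exact_mod_cast hN0.ne'
    have key : M * ((N0 : ℂ)⁻¹ • B) = B := by
      rw [hM, add_mul, Matrix.mul_smul, Matrix.mul_smul, hAB, smul_zero, add_zero,
        Matrix.smul_mul, Matrix.one_mul, smul_smul, inv_mul_cancel₀ hN0', one_smul]
    calc M⁻¹ * B = M⁻¹ * (M * ((N0 : ℂ)⁻¹ • B)) := by rw [key]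
      _ = (N0 : ℂ)⁻¹ • B := by
          rw [← Matrix.mul_assoc, Matrix.nonsing_inv_mul _ (isUnit_iff_isUnit_det _ |>.mp h1.isUnit), Matrix.one_mul]
  have key2 : R * M⁻¹ * (M + B) = R := by
    rw [Matrix.mul_add, Matrix.mul_assoc R M⁻¹ B, hMB, Matrix.mul_smul, hRB, smul_zero, add_zero,
      Matrix.mul_assoc, Matrix.nonsing_inv_mul _ (isUnit_iff_isUnit_det _ |>.mp h1.isUnit), Matrix.mul_one]
  have h2' := isUnit_iff_isUnit_det _ |>.mp h2.isUnit
  calc R * (M + B)⁻¹ = R * M⁻¹ * (M + B) * (M + B)⁻¹ := by rw [key2]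
    _ = R * M⁻¹ := by
        rw [Matrix.mul_assoc, Matrix.mul_nonsing_inv _ h2', Matrix.mul_one]
end

section
/- Let N0 > 0, τ > 0, c ≥ 0, and P_0, …, P_L ≥ 0 be real numbers, and let R_0, …, R_L and R_E be n × n complex Hermitian positive semidefinite matrices with Σ_{t=0}^{L} tr(R_t R_E) = 0. Then for every index l ∈ {0, …, L}, the matrices N0·I + τ Σ_{t=0}^{L} P_t R_t + τ c R_E and N0·I + τ Σ_{t=0}^{L} P_t R_t are invertible and R_l (N0·I + τ Σ_{t=0}^{L} P_t R_t + τ c R_E)^{-1} R_l = R_l (N0·I + τ Σ_{t=0}^{L} P_t R_t)^{-1} R_l. -/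
open Matrix
open scoped ComplexOrder

lemma my_smul_psd {n : ℕ} {r : ℝ} (hr : 0 ≤ r) {A : Matrix (Fin n) (Fin n) ℂ}
    (hA : A.PosSemidef) : ((r : ℂ) • A).PosSemidef := by
  rw [posSemidef_iff_dotProduct_mulVec]
  constructor
  · unfold Matrix.IsHermitian
    rw [conjTranspose_smul, hA.1, Complex.star_def, Complex.conj_ofReal]
  · intro x
    rw [smul_mulVec, dotProduct_smul, smul_eq_mul]
    exact mul_nonneg (by exact_mod_cast hr) (hA.dotProduct_mulVec_nonneg x)

lemma my_trace_mul_nonneg {n : ℕ} {A B : Matrix (Fin n) (Fin n) ℂ}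
    (hA : A.PosSemidef) (hB : B.PosSemidef) :
    0 ≤ Matrix.trace (A * B) ∧ (Matrix.trace (A * B) = 0 → A * B = 0) := by
  obtain ⟨C, hC⟩ : ∃ C : Matrix (Fin n) (Fin n) ℂ, A = Cᴴ * C := by
    open scoped MatrixOrder in exact CStarAlgebra.nonneg_iff_eq_star_mul_self.mp hA.nonneg
  obtain ⟨D, hD⟩ : ∃ D : Matrix (Fin n) (Fin n) ℂ, B = Dᴴ * D := by
    open scoped MatrixOrder in exact CStarAlgebra.nonneg_iff_eq_star_mul_self.mp hB.nonneg
  have key : Matrix.trace (A * B) = Matrix.trace ((C * Dᴴ)ᴴ * (C * Dᴴ)) := by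
    rw [hC, hD]
    rw [conjTranspose_mul, conjTranspose_conjTranspose]
    simp only [← Matrix.mul_assoc]
    rw [Matrix.trace_mul_cycle]
    simp only [Matrix.mul_assoc]
  have htr : ∀ (M : Matrix (Fin n) (Fin n) ℂ),
      Matrix.trace (Mᴴ * M) = ∑ j, ∑ i, star (M i j) * M i j := by
    intro M
    simp [Matrix.trace, Matrix.mul_apply, Matrix.diag, Matrix.conjTranspose_apply]
  constructor
  · rw [key, htr]
    exact Finset.sum_nonneg fun j _ => Finset.sum_nonneg fun i _ => star_mul_self_nonneg _
  · intro h0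
    rw [key, htr] at h0
    have hz : ∀ i j, (C * Dᴴ) i j = 0 := by
      intro i j
      have h1 := (Finset.sum_eq_zero_iff_of_nonneg (fun j _ =>
        Finset.sum_nonneg fun i _ => star_mul_self_nonneg ((C * Dᴴ) i j))).mp h0 j (Finset.mem_univ _)
      have h2 := (Finset.sum_eq_zero_iff_of_nonneg (fun i _ =>
        star_mul_self_nonneg ((C * Dᴴ) i j))).mp h1 i (Finset.mem_univ _)
      rcases mul_eq_zero.mp h2 with h | h
      · exact star_eq_zero.mp h
      · exact h
    have hCD : C * Dᴴ = 0 := by ext i j; exact hz i j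
    rw [hC, hD, Matrix.mul_assoc, ← Matrix.mul_assoc C, hCD]
    simp

/-- Central matrix identity (Eq. (82)) behind Theorem 3 of the paper: under the
statistical orthogonality condition `∑_t tr(R_t R_E) = 0`, the MMSE estimate covariance
with eavesdropper pilot contamination equals the contamination-free one. -/
theorem stmt_14 {n L : ℕ} (N0 τ c : ℝ) (hN0 : 0 < N0) (hτ : 0 < τ) (hc : 0 ≤ c)
    (P : Fin (L + 1) → ℝ) (hP : ∀ t, 0 ≤ P t)
    (R : Fin (L + 1) → Matrix (Fin n) (Fin n) ℂ)
    (RE : Matrix (Fin n) (Fin n) ℂ)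
    (hR : ∀ t, (R t).PosSemidef) (hRE : RE.PosSemidef)
    (horth : (∑ t, Matrix.trace (R t * RE)) = 0) (l : Fin (L + 1)) :
    IsUnit ((N0 : ℂ) • (1 : Matrix (Fin n) (Fin n) ℂ)
        + (τ : ℂ) • (∑ t, (P t : ℂ) • R t) + ((τ * c : ℝ) : ℂ) • RE) ∧
    IsUnit ((N0 : ℂ) • (1 : Matrix (Fin n) (Fin n) ℂ)
        + (τ : ℂ) • (∑ t, (P t : ℂ) • R t)) ∧
    R l * ((N0 : ℂ) • (1 : Matrix (Fin n) (Fin n) ℂ)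
        + (τ : ℂ) • (∑ t, (P t : ℂ) • R t) + ((τ * c : ℝ) : ℂ) • RE)⁻¹ * R l
      = R l * ((N0 : ℂ) • (1 : Matrix (Fin n) (Fin n) ℂ)
        + (τ : ℂ) • (∑ t, (P t : ℂ) • R t))⁻¹ * R l := by
  set S : Matrix (Fin n) (Fin n) ℂ := ∑ t, (P t : ℂ) • R t with hS
  set A : Matrix (Fin n) (Fin n) ℂ := (N0 : ℂ) • 1 + (τ : ℂ) • S with hAdef
  set B : Matrix (Fin n) (Fin n) ℂ := A + ((τ * c : ℝ) : ℂ) • RE with hBdef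
  have hnn : ∀ t ∈ Finset.univ, 0 ≤ Matrix.trace (R t * RE) :=
    fun t _ => (my_trace_mul_nonneg (hR t) hRE).1
  have hz : ∀ t, R t * RE = 0 := fun t =>
    (my_trace_mul_nonneg (hR t) hRE).2
      ((Finset.sum_eq_zero_iff_of_nonneg hnn).mp horth t (Finset.mem_univ t))
  have hz' : ∀ t, RE * R t = 0 := by
    intro t
    have h := congrArg Matrix.conjTranspose (hz t)
    rwa [Matrix.conjTranspose_mul, (hR t).1, hRE.1, Matrix.conjTranspose_zero] at h
  have hRES : RE * S = 0 := by
    rw [hS, Finset.mul_sum]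
    simp [Matrix.mul_smul, hz']
  have hSpsd : S.PosSemidef := by
    rw [hS]
    exact Finset.sum_induction _ Matrix.PosSemidef (fun a b ha hb => ha.add hb)
      Matrix.PosSemidef.zero (fun t _ => my_smul_psd (hP t) (hR t))
  have hA : A.PosDef := by
    have h1 : ((N0 : ℂ) • (1 : Matrix (Fin n) (Fin n) ℂ)).PosDef := by
      rw [Matrix.smul_one_eq_diagonal]
      exact Matrix.posDef_diagonal_iff.mpr fun i => by exact_mod_cast hN0
    exact h1.add_posSemidef (my_smul_psd hτ.le hSpsd)
  have hB : B.PosDef := hA.add_posSemidef (my_smul_psd (mul_nonneg hτ.le hc) hRE)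
  refine ⟨hB.isUnit, hA.isUnit, ?_⟩
  haveI : Invertible A := A.invertibleOfIsUnitDet ((Matrix.isUnit_iff_isUnit_det A).mp hA.isUnit)
  haveI : Invertible B := B.invertibleOfIsUnitDet ((Matrix.isUnit_iff_isUnit_det B).mp hB.isUnit)
  have hREA : RE * A = (N0 : ℂ) • RE := by
    rw [hAdef, Matrix.mul_add, Matrix.mul_smul, Matrix.mul_smul, hRES, Matrix.mul_one, smul_zero,
      add_zero]
  have h4 : RE * A⁻¹ * R l = 0 := by
    have h5 : (N0 : ℂ) • (RE * A⁻¹ * R l) = 0 := by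
      calc (N0 : ℂ) • (RE * A⁻¹ * R l) = ((N0 : ℂ) • RE) * A⁻¹ * R l := by
            rw [Matrix.smul_mul, Matrix.smul_mul]
        _ = RE * A * A⁻¹ * R l := by rw [hREA]
        _ = RE * R l := by rw [Matrix.mul_assoc RE A, Matrix.mul_inv_of_invertible,
              Matrix.mul_one]
        _ = 0 := hz' l
    have hN0' : (N0 : ℂ) ≠ 0 := by exact_mod_cast hN0.ne'
    exact (smul_eq_zero.mp h5).resolve_left hN0'
  have key2 : B * (A⁻¹ * R l) = R l := by
    rw [hBdef, Matrix.add_mul, Matrix.smul_mul, ← Matrix.mul_assoc A,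
      Matrix.mul_inv_of_invertible, Matrix.one_mul, ← Matrix.mul_assoc, h4, smul_zero, add_zero]
  have hinv : B⁻¹ * R l = A⁻¹ * R l := by
    have := congrArg (fun X => B⁻¹ * X) key2
    simpa [← Matrix.mul_assoc, Matrix.inv_mul_of_invertible] using this.symm
  rw [Matrix.mul_assoc, hinv, ← Matrix.mul_assoc]
end

section
/- Let β01, βE, P01, PE, τ, N0 > 0 be fixed real numbers and D = N0 + τ(P01 β01 + PE βE). For each positive integer N_t define T = τ P01 β01² N_t / D, B = τ P01 β01³ (N0 + τ PE βE) N_t / D², C = β01 (N0 + τ PE βE) N_t / D, E = βE N_t, Λ = τ P01 β01² βE N_t (τ P01 β01 + τ PE βE N_t + N0) / D², and η1(N_t) = (T² + B)(E·T − Λ) − (B + T·C)·Λ. If P01 β01 > PE βE, then there exists N₀ such that η1(N_t) > 0 for all N_t ≥ N₀; if P01 β01 < PE βE, then there exists N₀ such that η1(N_t) < 0 for all N_t ≥ N₀. -/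
set_option maxHeartbeats 1000000 in
/-- Theorem 8 of the paper: in the i.i.d. fading case, for large numbers of transmit
antennas `N_t`, the secrecy coefficient `η1(N_t)` is eventually positive when
`P01 β01 > PE βE` and eventually negative when `P01 β01 < PE βE`. -/
theorem stmt_19 (β01 βE P01 PE τ N0 : ℝ)
    (hβ01 : 0 < β01) (hβE : 0 < βE) (hP01 : 0 < P01) (hPE : 0 < PE)
    (hτ : 0 < τ) (hN0 : 0 < N0)
    (D : ℝ) (hD : D = N0 + τ * (P01 * β01 + PE * βE))
    (T B C E Λ η1 : ℕ → ℝ)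
    (hT : ∀ Nt : ℕ, T Nt = τ * P01 * β01 ^ 2 * Nt / D)
    (hB : ∀ Nt : ℕ, B Nt = τ * P01 * β01 ^ 3 * (N0 + τ * PE * βE) * Nt / D ^ 2)
    (hC : ∀ Nt : ℕ, C Nt = β01 * (N0 + τ * PE * βE) * Nt / D)
    (hE : ∀ Nt : ℕ, E Nt = βE * Nt)
    (hΛ : ∀ Nt : ℕ, Λ Nt
      = τ * P01 * β01 ^ 2 * βE * Nt * (τ * P01 * β01 + τ * PE * βE * Nt + N0) / D ^ 2)
    (hη : ∀ Nt : ℕ, η1 Nt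
      = (T Nt ^ 2 + B Nt) * (E Nt * T Nt - Λ Nt) - (B Nt + T Nt * C Nt) * Λ Nt) :
    (P01 * β01 > PE * βE → ∃ N₀ : ℕ, ∀ Nt : ℕ, N₀ ≤ Nt → 0 < η1 Nt) ∧
    (P01 * β01 < PE * βE → ∃ N₀ : ℕ, ∀ Nt : ℕ, N₀ ≤ Nt → η1 Nt < 0) := by
  have hDpos : 0 < D := by
    rw [hD]; positivity
  set q : ℝ := τ * P01 * β01 with hq
  set s : ℝ := τ * PE * βE with hs
  set m : ℝ := N0 + s with hm
  set K : ℝ := τ ^ 2 * P01 ^ 2 * β01 ^ 5 * βE with hK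
  have hKpos : 0 < K := by rw [hK]; positivity
  have hqpos : 0 < q := by rw [hq]; positivity
  have hspos : 0 < s := by rw [hs]; positivity
  have hmpos : 0 < m := by rw [hm]; positivity
  set Bc : ℝ := q * N0 + q ^ 2 + m * s with hBc
  set Cc : ℝ := 2 * m * (N0 + q) with hCc
  have hBcpos : 0 < Bc := by rw [hBc]; positivity
  have hCcpos : 0 < Cc := by rw [hCc]; positivity
  have key : ∀ Nt : ℕ, η1 Nt
      = (K / D ^ 4) * (Nt : ℝ) ^ 2 *
        (τ * (P01 * β01 - PE * βE) * D * (Nt : ℝ) ^ 2 - Bc * (Nt : ℝ) - Cc) := by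
    intro n
    rw [hη, hT, hB, hC, hE, hΛ, hBc, hCc, hK, hq, hs, hm]
    have hDne : D ≠ 0 := ne_of_gt hDpos
    field_simp
    ring_nf
    rw [hD]
    ring
  constructor
  · intro hgt
    set A : ℝ := τ * (P01 * β01 - PE * βE) * D with hA
    have hApos : 0 < A := by
      rw [hA]
      have : 0 < P01 * β01 - PE * βE := by linarith
      positivity
    obtain ⟨N, hN⟩ := exists_nat_gt ((Bc + Cc) / A)
    refine ⟨max N 1, fun n hn => ?_⟩
    have hn1 : (1 : ℝ) ≤ (n : ℝ) := by
      exact_mod_cast le_trans (le_max_right N 1) hn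
    have hnN : (N : ℝ) ≤ (n : ℝ) := by
      exact_mod_cast le_trans (le_max_left N 1) hn
    have hAx : Bc + Cc < A * (n : ℝ) := by
      have := (div_lt_iff₀ hApos).mp (lt_of_lt_of_le hN hnN)
      linarith [this]
    have hQ : 0 < A * (n : ℝ) ^ 2 - Bc * (n : ℝ) - Cc := by
      nlinarith [mul_nonneg hCcpos.le (sub_nonneg.mpr hn1)]
    rw [key n]
    have hKD : 0 < K / D ^ 4 := by positivity
    have hn2 : 0 < (n : ℝ) ^ 2 := by positivity
    exact mul_pos (mul_pos hKD hn2) hQ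
  · intro hlt
    refine ⟨1, fun n hn => ?_⟩
    have hn1 : (1 : ℝ) ≤ (n : ℝ) := by exact_mod_cast hn
    have hAneg : τ * (P01 * β01 - PE * βE) * D < 0 := by
      have h : P01 * β01 - PE * βE < 0 := by linarith
      exact mul_neg_of_neg_of_pos (mul_neg_of_pos_of_neg hτ h) hDpos
    have hn2 : 0 < (n : ℝ) ^ 2 := by positivity
    have hQ : τ * (P01 * β01 - PE * βE) * D * (n : ℝ) ^ 2 - Bc * (n : ℝ) - Cc < 0 := by
      have h1 := mul_neg_of_neg_of_pos hAneg hn2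
      have h2 : 0 < Bc * (n : ℝ) := mul_pos hBcpos (by linarith)
      linarith
    rw [key n]
    have hKD : 0 < K / D ^ 4 := by positivity
    exact mul_neg_of_pos_of_neg (mul_pos hKD hn2) hQ
end
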